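/- arXiv:2309.04690 — 2 statements merged into one kernel-verified Lean document; each statement's English description precedes it below -/
import Mathlib

section
/- Let R > 0, let z₀ ∈ ℂ with |z₀| = R, and let U be an open neighborhood of z₀. Then there exists an open set V containing the closed disc of radius R centered at 0 and a holomorphic function X : V → ℂ such that |X(z)| < 1 for every z in the closed disc of radius R with z ∉ U, while |X(z₀)| > 1. -/
open Complex

lemma aux_abs_lt (w : ℂ) (hw : ‖w‖ ≤ 1) (hw1 : w ≠ 1) :
    ‖1 + w‖ < 2 := by
  have h1 : Complex.normSq w ≤ 1 := by
    have := Complex.sq_norm w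
    nlinarith [norm_nonneg w]
  have hsq : Complex.normSq (1 + w) < 4 := by
    simp only [Complex.normSq_apply, Complex.add_re, Complex.add_im, Complex.one_re,
      Complex.one_im] at *
    rcases lt_or_eq_of_le (show w.re ≤ 1 by nlinarith) with h | h
    · nlinarith
    · have him : w.im = 0 := by nlinarith
      exact absurd (Complex.ext (by simpa using h) (by simpa using him)) hw1
  have : (‖1 + w‖) ^ 2 < 2 ^ 2 := by
    rw [Complex.sq_norm]; norm_num [hsq]
  exact lt_of_pow_lt_pow_left₀ 2 (by norm_num) this

/-- Key Lemma: a holomorphic function on a neighborhood of the closed disc of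
radius `R`, of modulus `< 1` off a neighborhood `U` of a boundary point `z₀`,
but of modulus `> 1` at `z₀`. -/
theorem key_lemma (R : ℝ) (hR : 0 < R) (z₀ : ℂ) (hz₀ : ‖z₀‖ = R)
    (U : Set ℂ) (hU : IsOpen U) (hz₀U : z₀ ∈ U) :
    ∃ V : Set ℂ, IsOpen V ∧ Metric.closedBall (0 : ℂ) R ⊆ V ∧
      ∃ X : ℂ → ℂ, DifferentiableOn ℂ X V ∧
        (∀ z ∈ Metric.closedBall (0 : ℂ) R, z ∉ U → ‖X z‖ < 1) ∧
        1 < ‖X z₀‖ := by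
  set f : ℂ → ℂ := fun z => (1 + z * (starRingEnd ℂ) z₀ / (R : ℂ) ^ 2) / 2 with hf
  have hRne : ((R : ℂ) ^ 2) ≠ 0 :=
    pow_ne_zero 2 (Complex.ofReal_ne_zero.mpr hR.ne')
  have hz₀ne : (starRingEnd ℂ) z₀ ≠ 0 := by
    simp only [ne_eq, map_eq_zero]
    intro h; rw [h] at hz₀; simp at hz₀; linarith
  have hmul : z₀ * (starRingEnd ℂ) z₀ = (R : ℂ) ^ 2 := by
    rw [Complex.mul_conj]
    rw [Complex.normSq_eq_norm_sq, hz₀]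
    norm_num
  have hfz₀ : f z₀ = 1 := by
    simp only [hf, hmul]
    rw [div_self hRne]; norm_num
  have hfdiff : Differentiable ℂ f := by
    apply Differentiable.div_const
    apply Differentiable.const_add
    exact (differentiable_id.mul_const _).div_const _
  have hflt : ∀ z ∈ Metric.closedBall (0 : ℂ) R, z ≠ z₀ → ‖f z‖ < 1 := by
    intro z hz hne
    set w : ℂ := z * (starRingEnd ℂ) z₀ / (R : ℂ) ^ 2 with hwdef
    have hzb : ‖z‖ ≤ R := by
      simpa [Complex.dist_eq] using hz
    have hAbsR2 : ‖(R:ℂ)^2‖ = R^2 := by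
      rw [norm_pow, Complex.norm_real, Real.norm_eq_abs, abs_of_pos hR]
    have hwabs : ‖w‖ ≤ 1 := by
      rw [hwdef, norm_div, norm_mul, Complex.norm_conj, hz₀, hAbsR2,
        div_le_one (by positivity)]
      nlinarith [norm_nonneg z]
    have hwne : w ≠ 1 := by
      intro h
      apply hne
      have : z * (starRingEnd ℂ) z₀ = (R : ℂ) ^ 2 := by
        rw [hwdef, div_eq_one_iff_eq hRne] at h
        exact h
      rw [← hmul] at this
      exact mul_right_cancel₀ hz₀ne this
    have := aux_abs_lt w hwabs hwne
    rw [hf]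
    simp only [norm_div, Complex.norm_two]
    rw [div_lt_one (by norm_num)]
    exact this
  -- compact set K
  set K : Set ℂ := Metric.closedBall (0 : ℂ) R \ U with hK
  have hKcpt : IsCompact K :=
    (isCompact_closedBall _ _).diff hU
  rcases K.eq_empty_or_nonempty with hKe | hKne
  · -- K empty : use X = 2 • f, say fun z => 2 * f z? simpler: take X = fun _ => 2
    refine ⟨Set.univ, isOpen_univ, Set.subset_univ _, fun _ => 2, ?_, ?_, ?_⟩
    · exact (differentiable_const _).differentiableOn
    · intro z hz hzU
      have hzK : z ∈ K := ⟨hz, hzU⟩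
      rw [hKe] at hzK
      exact absurd hzK (Set.notMem_empty z)
    · simp
  · obtain ⟨w₀, hw₀K, hmax⟩ :=
      hKcpt.exists_isMaxOn (f := fun z => ‖f z‖) hKne ((continuous_norm.comp hfdiff.continuous).continuousOn)
    set m : ℝ := ‖f w₀‖ with hm
    have hw₀ne : w₀ ≠ z₀ := fun h => hw₀K.2 (h ▸ hz₀U)
    have hmlt : m < 1 := hflt w₀ hw₀K.1 hw₀ne
    have hm0 : 0 ≤ m := norm_nonneg _
    set c : ℝ := 2 / (1 + m) with hc
    have hc1 : 1 < c := by
      rw [hc, lt_div_iff₀ (by linarith)]; linarith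
    refine ⟨Set.univ, isOpen_univ, Set.subset_univ _, fun z => (c : ℂ) * f z, ?_, ?_, ?_⟩
    · exact ((differentiable_const _).mul hfdiff).differentiableOn
    · intro z hz hzU
      have hzK : z ∈ K := ⟨hz, hzU⟩
      have hle : ‖f z‖ ≤ m := hmax hzK
      have : ‖(c : ℂ) * f z‖ = c * ‖f z‖ := by
        rw [norm_mul, Complex.norm_real, Real.norm_eq_abs, abs_of_pos (by linarith)]
      rw [this]
      calc c * ‖f z‖ ≤ c * m := by nlinarith
        _ < 1 := by rw [hc]; rw [div_mul_eq_mul_div, div_lt_one (by linarith)]; linarith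
    · show 1 < ‖(c : ℂ) * f z₀‖
      rw [hfz₀]
      simp only [mul_one, Complex.norm_real, Real.norm_eq_abs]
      rw [abs_of_pos (by linarith)]
      exact hc1
end

section
/- Let g, X be holomorphic functions on a neighborhood of the closed disc D̄_R, and suppose there is a closed disc D̄(c, r) ⊂ 𝔻_R on which |X(z)| ≥ m^{2/3} > 1 (where m = max_{D̄_R}|X| > 1) and |g(z)·X'(z)| ≥ μ > 0. For M ∈ ℤ₊ define h_M := g·(1 + X^M). Then for every z ∈ D̄(c,r), |h_M'(z)|² ≥ (1/4)·M²·μ²·m^{(4/3)(M−1)} − (sup_{D̄_R}|g'|)²·(1 + m^M)². -/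
/-- Central derivative lower bound for the perturbations `h_M = g·(1 + X^M)`. -/
theorem perturbed_deriv_lower_bound (g X : ℂ → ℂ) (R r : ℝ) (c : ℂ)
    (m μ C' : ℝ) (hm : 1 < m) (hμ : 0 < μ) (hC' : 0 ≤ C')
    (V : Set ℂ) (hV : IsOpen V) (hRV : Metric.closedBall (0 : ℂ) R ⊆ V)
    (hg : DifferentiableOn ℂ g V) (hX : DifferentiableOn ℂ X V)
    (hr : 0 < r) (hsub : Metric.closedBall c r ⊆ Metric.ball (0 : ℂ) R)
    (hXm : ∀ z ∈ Metric.closedBall (0 : ℂ) R, ‖X z‖ ≤ m)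
    (hXlow : ∀ z ∈ Metric.closedBall c r, m ^ ((2 : ℝ) / 3) ≤ ‖X z‖)
    (hgX : ∀ z ∈ Metric.closedBall c r, μ ≤ ‖g z * deriv X z‖)
    (hg' : ∀ z ∈ Metric.closedBall (0 : ℂ) R, ‖deriv g z‖ ≤ C') :
    ∀ M : ℕ, 1 ≤ M → ∀ z ∈ Metric.closedBall c r,
      (1 / 4) * (M : ℝ) ^ 2 * μ ^ 2 * m ^ ((4 / 3 : ℝ) * ((M : ℝ) - 1))
          - C' ^ 2 * (1 + m ^ M) ^ 2
        ≤ ‖deriv (fun w => g w * (1 + X w ^ M)) z‖ ^ 2 := by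
  intro M hM z hz
  have hzR : z ∈ Metric.closedBall (0:ℂ) R := Metric.ball_subset_closedBall (hsub hz)
  have hzV : z ∈ V := hRV hzR
  have hm0 : (0:ℝ) < m := lt_trans one_pos hm
  have hgz : HasDerivAt g (deriv g z) z :=
    (hg.differentiableAt (hV.mem_nhds hzV)).hasDerivAt
  have hXz : HasDerivAt X (deriv X z) z :=
    (hX.differentiableAt (hV.mem_nhds hzV)).hasDerivAt
  have hXpow : HasDerivAt (fun w => (1:ℂ) + X w ^ M)
      ((M : ℂ) * X z ^ (M - 1) * deriv X z) z := by
    simpa using (hXz.pow M).const_add (1:ℂ)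
  have hd : deriv (fun w => g w * (1 + X w ^ M)) z
      = deriv g z * (1 + X z ^ M) + g z * ((M:ℂ) * X z ^ (M-1) * deriv X z) :=
    (hgz.mul hXpow).deriv
  rw [hd]
  set A : ℂ := g z * ((M:ℂ) * X z ^ (M-1) * deriv X z) with hA_def
  set B : ℂ := deriv g z * (1 + X z ^ M) with hB_def
  -- |B| ≤ C' * (1 + m ^ M)
  have hB : ‖B‖ ≤ C' * (1 + m ^ M) := by
    rw [hB_def, norm_mul]
    have h1 : ‖1 + X z ^ M‖ ≤ 1 + m ^ M := by
      calc ‖1 + X z ^ M‖ ≤ 1 + ‖X z‖ ^ M := by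
            simpa using (norm_add_le 1 (X z ^ M))
        _ ≤ 1 + m ^ M := by
            have := pow_le_pow_left₀ (norm_nonneg (X z)) (hXm z hzR) M
            linarith
    exact mul_le_mul (hg' z hzR) h1 (norm_nonneg _) hC'
  -- |A| ≥ M * (m^{2/3})^{M-1} * μ
  set t : ℝ := (M:ℝ) * (m ^ ((2:ℝ)/3)) ^ (M-1) * μ with ht_def
  have hmr0 : (0:ℝ) ≤ m ^ ((2:ℝ)/3) := Real.rpow_nonneg hm0.le _
  have hA : t ≤ ‖A‖ := by
    have habsA : ‖A‖
        = (M:ℝ) * ‖X z‖ ^ (M-1) * ‖g z * deriv X z‖ := by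
      rw [hA_def]
      simp [norm_mul, norm_pow, Complex.norm_natCast]
      ring
    rw [habsA, ht_def]
    have h1 : (m ^ ((2:ℝ)/3)) ^ (M-1) ≤ ‖X z‖ ^ (M-1) :=
      pow_le_pow_left₀ hmr0 (hXlow z hz) _
    have h2 : μ ≤ ‖g z * deriv X z‖ := hgX z hz
    have hM0 : (0:ℝ) ≤ (M:ℝ) := Nat.cast_nonneg _
    nlinarith [pow_nonneg hmr0 (M-1), norm_nonneg (g z * deriv X z),
      mul_le_mul h1 h2 hμ.le (pow_nonneg (norm_nonneg _) (M-1))]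
  have ht0 : 0 ≤ t := by positivity
  -- identity for t^2
  have hsq : (M:ℝ) ^ 2 * μ ^ 2 * m ^ ((4 / 3 : ℝ) * ((M : ℝ) - 1)) = t ^ 2 := by
    have hcast : ((M - 1 : ℕ) : ℝ) = (M:ℝ) - 1 := by
      push_cast [Nat.cast_sub hM]; ring
    have : ((m ^ ((2:ℝ)/3)) ^ (M-1)) ^ 2 = m ^ ((4 / 3 : ℝ) * ((M : ℝ) - 1)) := by
      rw [← Real.rpow_natCast (m ^ ((2:ℝ)/3)) (M-1), ← Real.rpow_natCast _ 2,
        ← Real.rpow_mul (Real.rpow_nonneg hm0.le _), ← Real.rpow_mul hm0.le]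
      congr 1
      rw [hcast]
      push_cast
      ring
    rw [ht_def, ← this]
    ring
  -- combine
  have hAB : ‖A‖ ≤ ‖B + A‖ + ‖B‖ := by
    calc ‖A‖ = ‖(B + A) + (-B)‖ := by congr 1; ring
      _ ≤ ‖B + A‖ + ‖-B‖ := norm_add_le _ _
      _ = ‖B + A‖ + ‖B‖ := by rw [norm_neg]
  have hx0 : 0 ≤ ‖B + A‖ := norm_nonneg _
  have hB0 : 0 ≤ ‖B‖ := norm_nonneg _
  nlinarith [hsq, hA, hAB, hB, sq_nonneg (‖B + A‖ - ‖B‖),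
    sq_nonneg t, mul_le_mul hB hB hB0 (by positivity : (0:ℝ) ≤ C' * (1 + m ^ M))]
end
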